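/- arXiv:2002.10382 — 5 statements merged into one kernel-verified Lean document; each statement's English description precedes it below -/
import Mathlib

section
/- Let ψ ∈ S(ℝ, ℂ) be a Schwartz function, let (Iφ)(x) := (1/x)φ(1/x), and let Π be the differential operator (Πφ)(x) := i·x·(d/dx)[x·φ(x)]. Then for every x ≠ 0 one has (Π(Iψ))(x) = −(i/x)·ψ′(1/x) = (I(−iψ′))(x). That is, Π∘I = I∘(−i d/dx) on the Schwartz space, so the transformed operator ℘ := I Π I acts as the momentum operator −i d/dx on I[S(ℝ)]. -/
open MeasureTheory

/-- The inversion operator `(Iψ)(x) = (1/x) ψ(1/x)`. -/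
noncomputable def invOp (ψ : ℝ → ℂ) (x : ℝ) : ℂ :=
  (1 / (x : ℂ)) * ψ (1 / x)

/-- for a Schwartz function `ψ` and `x ≠ 0`,
`(Π (Iψ))(x) = -(i/x) ψ'(1/x) = (I(-iψ'))(x)`, where `(Πφ)(x) = i x (d/dx)(x φ(x))`. -/
theorem PiOp_comp_invOp (ψ : SchwartzMap ℝ ℂ) (x : ℝ) (hx : x ≠ 0) :
    Complex.I * (x : ℂ) * deriv (fun y : ℝ => (y : ℂ) * invOp (⇑ψ) y) x
        = -(Complex.I / (x : ℂ)) * deriv (fun y : ℝ => ψ y) (1 / x) ∧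
    -(Complex.I / (x : ℂ)) * deriv (fun y : ℝ => ψ y) (1 / x)
        = invOp (fun y : ℝ => -Complex.I * deriv (fun z : ℝ => ψ z) y) x := by
  have hxC : (x : ℂ) ≠ 0 := by exact_mod_cast hx
  -- the function y ↦ y * invOp ψ y agrees with y ↦ ψ (1/y) near x
  have hEq : (fun y : ℝ => (y : ℂ) * invOp (⇑ψ) y) =ᶠ[nhds x] (fun y : ℝ => ψ (1 / y)) := by
    filter_upwards [isOpen_compl_singleton.mem_nhds (by simpa using hx :
      x ∈ ({0}ᶜ : Set ℝ))] with y hy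
    have hyC : (y : ℂ) ≠ 0 := by exact_mod_cast hy
    simp [invOp]
    field_simp
  have hψd : HasDerivAt (fun z : ℝ => ψ z) (deriv (fun z : ℝ => ψ z) (1 / x)) (1 / x) :=
    (ψ.differentiable.differentiableAt).hasDerivAt
  have hinv : HasDerivAt (fun y : ℝ => 1 / y) (-(1 / x ^ 2)) x := by
    simpa [one_div] using hasDerivAt_inv hx
  have hcomp : HasDerivAt (fun y : ℝ => ψ (1 / y))
      ((-(1 / x ^ 2)) • deriv (fun z : ℝ => ψ z) (1 / x)) x :=
    hψd.scomp x hinv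
  have hderiv : deriv (fun y : ℝ => (y : ℂ) * invOp (⇑ψ) y) x
      = (-(1 / x ^ 2)) • deriv (fun z : ℝ => ψ z) (1 / x) := by
    rw [Filter.EventuallyEq.deriv_eq hEq]; exact hcomp.deriv
  constructor
  · rw [hderiv]
    field_simp
    simp only [Complex.real_smul, Complex.ofReal_neg, Complex.ofReal_pow, Complex.ofReal_inv, Complex.ofReal_div, Complex.ofReal_one]
    field_simp
  · simp [invOp]
    field_simp
end

section
/- Fix θ ∈ ℝ. For t ∈ ℝ define the operator V_θ(t) on L²(ℝ, ℂ) by (V_θ(t)ψ)(x) := e^{i(θ/2)(1 − sgn(1 − tx))·sgn(x)} · (1 − tx)^{−1} · ψ( x/(1 − tx) ) (for a.e. x with 1 − tx ≠ 0). Then: (i) each V_θ(t) is an isometry of L²(ℝ): ‖V_θ(t)ψ‖₂ = ‖ψ‖₂ for all ψ ∈ L²(ℝ); (ii) the group law holds: for all t₁, t₂ ∈ ℝ and ψ ∈ L²(ℝ), V_θ(t₁)(V_θ(t₂)ψ) = V_θ(t₁ + t₂)ψ almost everywhere; in particular V_θ(0) = Id and V_θ(t)⁻¹ = V_θ(−t),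 so (V_θ(t))_{t∈ℝ} is a one-parameter group of unitaries (the unitary propagator e^{−itΠ_θ} of the self-adjoint extension Π_θ). -/
open MeasureTheory

/- Auxiliary lemmas about `Real.sign`. -/

lemma sign_mul' (x y : ℝ) : Real.sign (x * y) = Real.sign x * Real.sign y := by
  rcases lt_trichotomy x 0 with hx|hx|hx <;> rcases lt_trichotomy y 0 with hy|hy|hy <;>
    simp_all [Real.sign_of_pos, Real.sign_of_neg, mul_pos, mul_pos_of_neg_of_neg,
      mul_neg_of_pos_of_neg, mul_neg_of_neg_of_pos]

lemma sign_inv' (x : ℝ) : Real.sign x⁻¹ = Real.sign x := by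
  rcases lt_trichotomy x 0 with hx|hx|hx <;>
    simp_all [Real.sign_of_pos, Real.sign_of_neg, inv_pos, inv_neg'']

lemma sign_div' (x y : ℝ) : Real.sign (x / y) = Real.sign x * Real.sign y := by
  rw [div_eq_mul_inv, sign_mul', sign_inv']

lemma sign_sq_of_ne (x : ℝ) (h : x ≠ 0) : Real.sign x * Real.sign x = 1 := by
  rcases lt_trichotomy x 0 with hx|hx|hx <;>
    simp_all [Real.sign_of_pos, Real.sign_of_neg]

/-- The unitary propagator `V_θ(t) = e^{-itΠ_θ}` of the self-adjoint extension `Π_θ`: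
`(V_θ(t)ψ)(x) = e^{i(θ/2)(1 - sgn(1-tx)) sgn(x)} (1-tx)⁻¹ ψ(x/(1-tx))`. -/
noncomputable def Vprop (θ t : ℝ) (ψ : ℝ → ℂ) (x : ℝ) : ℂ :=
  Complex.exp (Complex.I * ((θ / 2) * (1 - Real.sign (1 - t * x)) * Real.sign x : ℝ)) *
    (1 / ((1 - t * x : ℝ) : ℂ)) * ψ (x / (1 - t * x))

lemma Vprop_zero (θ : ℝ) (ψ : ℝ → ℂ) (x : ℝ) : Vprop θ 0 ψ x = ψ x := by
  simp [Vprop, Real.sign_one]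

lemma norm_Vprop_sq (θ t : ℝ) (ψ : ℝ → ℂ) (x : ℝ) :
    ‖Vprop θ t ψ x‖ ^ 2 = |((1 - t * x) ^ 2)⁻¹| * ‖ψ (x / (1 - t * x))‖ ^ 2 := by
  unfold Vprop
  rw [norm_mul, norm_mul]
  have h1 : ‖Complex.exp (Complex.I *
      ((θ / 2) * (1 - Real.sign (1 - t * x)) * Real.sign x : ℝ))‖ = 1 := by
    rw [mul_comm, Complex.norm_exp_ofReal_mul_I]
  rw [h1]
  have h2 : ‖(1 / ((1 - t * x : ℝ) : ℂ))‖ = |1 - t * x|⁻¹ := by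
    rw [norm_div, norm_one, Complex.norm_real, Real.norm_eq_abs, one_div]
  rw [h2, abs_inv, abs_pow, ← inv_pow]
  ring

/-- Pointwise group law: valid at every `x` with `1 - t₁ x ≠ 0`. -/
lemma Vprop_comp (θ t₁ t₂ : ℝ) (ψ : ℝ → ℂ) (x : ℝ) (h : 1 - t₁ * x ≠ 0) :
    Vprop θ t₁ (Vprop θ t₂ ψ) x = Vprop θ (t₁ + t₂) ψ x := by
  unfold Vprop
  set a := 1 - t₁ * x with ha
  set b := 1 - (t₁ + t₂) * x with hb
  set u := x / a with hu
  have hba : 1 - t₂ * u = b / a := by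
    rw [eq_div_iff h, hu, sub_mul, mul_assoc, div_mul_cancel₀ _ h, hb, ha]; ring
  rw [hba]
  by_cases hb0 : b = 0
  · simp [hb0]
  · have harg : u / (b / a) = x / b := by
      rw [hu]; field_simp
    have hdiv : (1 / ((a : ℝ) : ℂ)) * (1 / ((b / a : ℝ) : ℂ)) = 1 / ((b : ℝ) : ℂ) := by
      have ha' : ((a : ℝ) : ℂ) ≠ 0 := by exact_mod_cast h
      have hb' : ((b : ℝ) : ℂ) ≠ 0 := by exact_mod_cast hb0
      push_cast
      field_simp
    have hphase : Complex.exp (Complex.I * ((θ / 2) * (1 - Real.sign a) * Real.sign x : ℝ)) *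
        Complex.exp (Complex.I * ((θ / 2) * (1 - Real.sign (b / a)) * Real.sign u : ℝ)) =
        Complex.exp (Complex.I * ((θ / 2) * (1 - Real.sign b) * Real.sign x : ℝ)) := by
      have h1 : Real.sign u = Real.sign x * Real.sign a := by
        rw [hu, sign_div']
      have h2 : Real.sign (b / a) = Real.sign b * Real.sign a := by
        rw [sign_div']
      have h3 := sign_sq_of_ne a h
      have hr : (θ / 2) * (1 - Real.sign a) * Real.sign x +
          (θ / 2) * (1 - Real.sign (b / a)) * Real.sign u =
          (θ / 2) * (1 - Real.sign b) * Real.sign x := by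
        rw [h1, h2]
        linear_combination (-(θ / 2) * Real.sign x * Real.sign b) * h3
      rw [← Complex.exp_add, ← mul_add, ← Complex.ofReal_add, hr]
    calc Complex.exp (Complex.I * ((θ / 2) * (1 - Real.sign a) * Real.sign x : ℝ)) *
          (1 / ((a : ℝ) : ℂ)) *
          (Complex.exp (Complex.I * ((θ / 2) * (1 - Real.sign (b / a)) * Real.sign u : ℝ)) *
            (1 / ((b / a : ℝ) : ℂ)) * ψ (u / (b / a)))
        = (Complex.exp (Complex.I * ((θ / 2) * (1 - Real.sign a) * Real.sign x : ℝ)) *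
            Complex.exp (Complex.I * ((θ / 2) * (1 - Real.sign (b / a)) * Real.sign u : ℝ))) *
          ((1 / ((a : ℝ) : ℂ)) * (1 / ((b / a : ℝ) : ℂ))) * ψ (u / (b / a)) := by ring
      _ = _ := by rw [hphase, hdiv, harg]

/-- A.e., `1 - t x ≠ 0`. -/
lemma ae_sub_mul_ne (t : ℝ) : ∀ᵐ x : ℝ ∂(volume : Measure ℝ), 1 - t * x ≠ 0 := by
  by_cases ht : t = 0
  · filter_upwards with x
    simp [ht]
  · rw [ae_iff]
    refine measure_mono_null (fun x hx => ?_) (measure_singleton (1 / t))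
    simp only [Set.mem_setOf_eq, not_not] at hx
    have : x = 1 / t := by rw [eq_div_iff ht]; linarith
    simp [this]

/-- Change of variables: each `V_θ(t)` preserves the `L²` norm. -/
lemma Vprop_isometry (θ t : ℝ) (ψ : ℝ → ℂ) :
    (∫ x : ℝ, ‖Vprop θ t ψ x‖ ^ 2) = ∫ x : ℝ, ‖ψ x‖ ^ 2 := by
  by_cases ht : t = 0
  · subst ht
    simp only [Vprop_zero]
  · set φ : ℝ → ℝ := fun x => x / (1 - t * x) with hφ
    set s : Set ℝ := {1 / t}ᶜ with hsdef
    have hs : MeasurableSet s := (measurableSet_singleton _).compl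
    have hmem : ∀ x ∈ s, 1 - t * x ≠ 0 := by
      intro x hx hc
      apply hx
      have : x = 1 / t := by rw [eq_div_iff ht]; linarith
      simp [this]
    have hder : ∀ x ∈ s, HasDerivWithinAt φ (((1 - t * x) ^ 2)⁻¹) s x := by
      intro x hx
      have hne := hmem x hx
      have h0 : HasDerivAt φ ((1 * (1 - t * x) - x * (0 - t * 1)) / (1 - t * x) ^ 2) x :=
        (hasDerivAt_id x).div
          ((hasDerivAt_const x (1 : ℝ)).sub ((hasDerivAt_id x).const_mul t)) hne
      have : (1 * (1 - t * x) - x * (0 - t * 1)) / (1 - t * x) ^ 2 = ((1 - t * x) ^ 2)⁻¹ := by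
        field_simp
        ring
      rw [this] at h0
      exact h0.hasDerivWithinAt
    have hinj : Set.InjOn φ s := by
      intro x hx y hy hxy
      have hx' := hmem x hx
      have hy' := hmem y hy
      rw [hφ] at hxy
      simp only at hxy
      rw [div_eq_div_iff hx' hy'] at hxy
      nlinarith [hxy]
    have himg : φ '' s = {-(1 / t)}ᶜ := by
      ext y
      simp only [Set.mem_image, Set.mem_compl_iff, Set.mem_singleton_iff, hsdef, hφ]
      constructor
      · rintro ⟨x, hx, rfl⟩
        have hne : 1 - t * x ≠ 0 := by
          intro hc
          apply hx
          have : x = 1 / t := by rw [eq_div_iff ht]; linarith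
          simp [this]
        intro hc
        rw [div_eq_iff hne] at hc
        field_simp at hc
        linarith
      · intro hy
        have h1 : 1 + t * y ≠ 0 := by
          intro hc
          apply hy
          field_simp
          linarith
        refine ⟨y / (1 + t * y), ?_, ?_⟩
        · intro hc
          rw [div_eq_div_iff h1 ht] at hc
          nlinarith [hc]
        · field_simp
          have h2 : 1 + y * t ≠ 0 := by rwa [mul_comm y t]
          rw [mul_sub, mul_one, mul_div_cancel₀ _ h2]
          simp
    have hres : (volume : Measure ℝ).restrict s = volume := by
      apply Measure.restrict_eq_self_of_ae_mem
      rw [ae_iff]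
      have : {x : ℝ | ¬ x ∈ s} = {1 / t} := by
        ext x; simp [hsdef]
      rw [this]
      exact measure_singleton _
    have hres2 : (volume : Measure ℝ).restrict (φ '' s) = volume := by
      rw [himg]
      apply Measure.restrict_eq_self_of_ae_mem
      rw [ae_iff]
      have : {x : ℝ | ¬ x ∈ ({-(1 / t)}ᶜ : Set ℝ)} = {-(1 / t)} := by
        ext x; simp
      rw [this]
      exact measure_singleton _
    have key := integral_image_eq_integral_abs_deriv_smul hs hder hinj
      (fun y => ‖ψ y‖ ^ 2)
    simp only [smul_eq_mul] at key
    calc (∫ x : ℝ, ‖Vprop θ t ψ x‖ ^ 2)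
        = ∫ x : ℝ, |((1 - t * x) ^ 2)⁻¹| * ‖ψ (x / (1 - t * x))‖ ^ 2 := by
          simp only [norm_Vprop_sq]
      _ = ∫ x in s, |((1 - t * x) ^ 2)⁻¹| * ‖ψ (x / (1 - t * x))‖ ^ 2 := by rw [hres]
      _ = ∫ y in φ '' s, ‖ψ y‖ ^ 2 := key.symm
      _ = ∫ y : ℝ, ‖ψ y‖ ^ 2 := by rw [hres2]

/-- `(V_θ(t))_{t ∈ ℝ}` is a one-parameter group of unitaries: each `V_θ(t)`
is an isometry of `L²(ℝ)`, the group law holds a.e., `V_θ(0) = Id`, and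
`V_θ(t)⁻¹ = V_θ(-t)`. -/
theorem Vprop_unitary_group (θ : ℝ) :
    (∀ t : ℝ, ∀ ψ : ℝ → ℂ, MemLp ψ 2 (volume : Measure ℝ) →
      (∫ x : ℝ, ‖Vprop θ t ψ x‖ ^ 2) = ∫ x : ℝ, ‖ψ x‖ ^ 2) ∧
    (∀ t₁ t₂ : ℝ, ∀ ψ : ℝ → ℂ,
      (fun x => Vprop θ t₁ (Vprop θ t₂ ψ) x) =ᵐ[(volume : Measure ℝ)]
        Vprop θ (t₁ + t₂) ψ) ∧
    (∀ ψ : ℝ → ℂ, ∀ x : ℝ, Vprop θ 0 ψ x = ψ x) ∧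
    (∀ t : ℝ, ∀ ψ : ℝ → ℂ,
      (fun x => Vprop θ t (Vprop θ (-t) ψ) x) =ᵐ[(volume : Measure ℝ)] ψ) := by
  have hgroup : ∀ t₁ t₂ : ℝ, ∀ ψ : ℝ → ℂ,
      (fun x => Vprop θ t₁ (Vprop θ t₂ ψ) x) =ᵐ[(volume : Measure ℝ)]
        Vprop θ (t₁ + t₂) ψ := by
    intro t₁ t₂ ψ
    filter_upwards [ae_sub_mul_ne t₁] with x hx
    exact Vprop_comp θ t₁ t₂ ψ x hx
  refine ⟨fun t ψ _ => Vprop_isometry θ t ψ, hgroup, Vprop_zero θ, ?_⟩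
  intro t ψ
  have h := hgroup t (-t) ψ
  rw [add_neg_cancel] at h
  have h0 : Vprop θ 0 ψ = ψ := funext (Vprop_zero θ ψ)
  rw [h0] at h
  exact h
end

section
/- Let m > 0, λ > 0, ℓ := 1/λ, and fix initial data ϱ, ℘ ∈ ℝ with ℘ ≠ 0. Define p(t) := ℓ℘/( (℘/(2m))·t + ℓ ) and x(t) := ((ℓ + ϱ)/ℓ²)·( (℘/(2m))·t + ℓ )² − ℓ. Then on any interval J containing 0 on which (℘/(2m))·t + ℓ ≠ 0 (i.e., avoiding the critical time t_c = −2mℓ/℘), the pair (x, p) solves the one-dimensional thermal Hamilton system ẋ(t) = (1 + λ·x(t))·p(t)/m, ṗ(t) = −λ·p(t)²/(2m), with initial conditions x(0) = ϱ and p(0) = ℘. Moreover x(t_c) = −ℓ (the solution touches the critical point exactly at the critical time). -/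
/-- explicit solution of the one-dimensional thermal Hamilton system
`ẋ = (1+λx)p/m`, `ṗ = -λp²/(2m)` with initial data `x(0) = ϱ`, `p(0) = ℘ ≠ 0`:
`p(t) = ℓ℘/((℘/(2m))t + ℓ)` and `x(t) = ((ℓ+ϱ)/ℓ²)((℘/(2m))t + ℓ)² - ℓ` (where
`ℓ = 1/λ`), valid away from the critical time `t_c = -2mℓ/℘`, and `x(t_c) = -ℓ`. -/
theorem thermal_1D_solution (m lam ℓ : ℝ) (hm : 0 < m) (hlam : 0 < lam)
    (hℓ : ℓ = 1 / lam) (ϱ ℘ : ℝ) (h℘ : ℘ ≠ 0)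
    (p x : ℝ → ℝ)
    (hp : p = fun t => ℓ * ℘ / ((℘ / (2 * m)) * t + ℓ))
    (hx : x = fun t => ((ℓ + ϱ) / ℓ ^ 2) * ((℘ / (2 * m)) * t + ℓ) ^ 2 - ℓ)
    (J : Set ℝ) (h0J : (0 : ℝ) ∈ J)
    (hJ : ∀ t ∈ J, (℘ / (2 * m)) * t + ℓ ≠ 0) :
    (∀ t ∈ J, HasDerivAt x ((1 + lam * x t) * p t / m) t) ∧
    (∀ t ∈ J, HasDerivAt p (-lam * (p t) ^ 2 / (2 * m)) t) ∧
    x 0 = ϱ ∧ p 0 = ℘ ∧ x (-(2 * m * ℓ) / ℘) = -ℓ := by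
  have hm' : m ≠ 0 := ne_of_gt hm
  have hlam' : lam ≠ 0 := ne_of_gt hlam
  have hℓ0 : ℓ ≠ 0 := by rw [hℓ]; positivity
  have hlamℓ : lam * ℓ = 1 := by rw [hℓ]; field_simp
  -- derivative of u(t) = (℘/(2m))*t + ℓ
  have hu : ∀ t : ℝ, HasDerivAt (fun t => (℘ / (2 * m)) * t + ℓ) (℘ / (2 * m)) t := by
    intro t
    simpa using ((hasDerivAt_id t).const_mul (℘ / (2 * m))).add_const ℓ
  have hlam2 : lam = ℓ⁻¹ := by rw [hℓ]; field_simp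
  refine ⟨?_, ?_, ?_, ?_, ?_⟩
  · intro t ht
    have hut := hJ t ht
    have h1 := (((hu t).pow 2).const_mul ((ℓ + ϱ) / ℓ ^ 2)).sub_const ℓ
    rw [hx]
    rw [hp, hlam2]
    refine h1.congr_deriv ?_
    simp only
    generalize hug : (℘ / (2 * m)) * t + ℓ = u at hut ⊢
    field_simp
    ring
  · intro t ht
    have hut := hJ t ht
    have h1 : HasDerivAt p (-(ℓ * ℘ * (℘ / (2 * m))) / ((℘ / (2 * m)) * t + ℓ) ^ 2) t := by
      rw [hp]
      refine ((hasDerivAt_const t (ℓ * ℘)).div (hu t) hut).congr_deriv ?_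
      ring
    convert h1 using 1
    rw [hp, hlam2]
    simp only
    generalize hug : (℘ / (2 * m)) * t + ℓ = u at hut ⊢
    field_simp
  · rw [hx]; field_simp; ring
  · rw [hp]; field_simp; ring
  · rw [hx]
    have : (℘ / (2 * m)) * (-(2 * m * ℓ) / ℘) + ℓ = 0 := by field_simp; ring
    simp [this]
end

section
/- Let d ≥ 2, m > 0, λ > 0, ℓ := 1/λ, and fix initial data ϱ₀, ϱ₁, …, ϱ_{d−1} ∈ ℝ, ℘₀ ∈ ℝ and ℘₁, …, ℘_{d−1} ∈ ℝ with ℘⊥ := (∑_{j=1}^{d−1} ℘_j²)^{1/2} > 0. Set φ := arctan(℘₀/℘⊥), A := (ℓ + ϱ₀)/cos²(φ), and θ(t) := φ − (λ℘⊥/(2m))·t. Define p₀(t) := ℘⊥·tan(θ(t)), p_j(t) := ℘_j for j = 1,…,d−1, x₀(t) := ϱ₀ + A·(cos²(θ(t)) − cos²(φ)), and x_j(t) := ϱ_j + (λ℘_j A/(2m))·t − (A/2)·(℘_j/℘⊥)·( sin(2θ(t)) − sin(2φ) ). Then on any interval J containing 0 on which cos(θ(t)) ≠ 0, these functions solve the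 thermal Hamilton system ẋ_j(t) = (1 + λ x₀(t))·p_j(t)/m for j = 0,…,d−1 and ṗ₀(t) = −λ·(p₀(t)² + ℘⊥²)/(2m), ṗ_j(t) = 0 for j = 1,…,d−1, with initial conditions x_j(0) = ϱ_j and p_j(0) = ℘_j (in particular p₀(0) = ℘₀ since tan(φ) = ℘₀/℘⊥). -/
open Finset

/-- the explicit general solution of the classical thermal Hamilton system
in adapted coordinates (direction of the thermal gradient = 0-th axis), in dimension
`d ≥ 2`, with nonvanishing orthogonal momentum `℘⊥ > 0`:
`p₀(t) = ℘⊥ tan(θ(t))`, `p_j(t) = ℘_j`, `x₀(t) = ϱ₀ + A(cos²θ(t) - cos²φ)`,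
`x_j(t) = ϱ_j + (λ℘_jA/(2m))t - (A/2)(℘_j/℘⊥)(sin 2θ(t) - sin 2φ)`, where
`φ = arctan(℘₀/℘⊥)`, `A = (ℓ+ϱ₀)/cos²φ`, `θ(t) = φ - (λ℘⊥/(2m))t`, solves
`ẋ_j = (1+λx₀)p_j/m`, `ṗ₀ = -λ(p₀² + ℘⊥²)/(2m)`, `ṗ_j = 0 (j ≠ 0)` with the given
initial conditions, on any interval avoiding the zeros of `cos θ`. -/
theorem thermal_general_solution (d : ℕ) (m lam ℓ : ℝ) (hm : 0 < m) (hlam : 0 < lam)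
    (hℓ : ℓ = 1 / lam)
    (ϱ ℘ : Fin (d + 2) → ℝ) (perp φ A : ℝ) (θ : ℝ → ℝ)
    (hperp : perp = Real.sqrt (∑ j ∈ Finset.univ.erase (0 : Fin (d + 2)), (℘ j) ^ 2))
    (hperp_pos : 0 < perp)
    (hφ : φ = Real.arctan (℘ 0 / perp))
    (hA : A = (ℓ + ϱ 0) / (Real.cos φ) ^ 2)
    (hθ : θ = fun t => φ - (lam * perp / (2 * m)) * t)
    (p x : ℝ → Fin (d + 2) → ℝ)
    (hp : p = fun t j => if j = 0 then perp * Real.tan (θ t) else ℘ j)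
    (hx : x = fun t j => if j = 0 then ϱ 0 + A * ((Real.cos (θ t)) ^ 2 - (Real.cos φ) ^ 2)
      else ϱ j + (lam * ℘ j * A / (2 * m)) * t
        - (A / 2) * (℘ j / perp) * (Real.sin (2 * θ t) - Real.sin (2 * φ)))
    (J : Set ℝ) (h0J : (0 : ℝ) ∈ J) (hJ : ∀ t ∈ J, Real.cos (θ t) ≠ 0) :
    (∀ t ∈ J, ∀ j : Fin (d + 2),
      HasDerivAt (fun s => x s j) ((1 + lam * x t 0) * p t j / m) t) ∧
    (∀ t ∈ J,
      HasDerivAt (fun s => p s 0) (-lam * ((p t 0) ^ 2 + perp ^ 2) / (2 * m)) t) ∧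
    (∀ t ∈ J, ∀ j : Fin (d + 2), j ≠ 0 → HasDerivAt (fun s => p s j) 0 t) ∧
    (∀ j : Fin (d + 2), x 0 j = ϱ j) ∧ (∀ j : Fin (d + 2), p 0 j = ℘ j) := by
  have hm' : m ≠ 0 := ne_of_gt hm
  have hlam' : lam ≠ 0 := ne_of_gt hlam
  have hperp' : perp ≠ 0 := ne_of_gt hperp_pos
  have hcφ : Real.cos φ ≠ 0 := by
    rw [hφ]; exact ne_of_gt (Real.cos_arctan_pos _)
  have htφ : Real.tan φ = ℘ 0 / perp := by rw [hφ, Real.tan_arctan]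
  -- key algebraic identity: `lam * A * cos φ ^ 2 = 1 + lam * ϱ 0`
  have hAc : lam * (A * Real.cos φ ^ 2) = 1 + lam * ϱ 0 := by
    rw [hA, hℓ]; field_simp
  subst hθ hp hx
  -- derivative of θ
  have hθd : ∀ t : ℝ, HasDerivAt (fun s : ℝ => φ - lam * perp / (2 * m) * s)
      (-(lam * perp / (2 * m))) t := by
    intro t
    simpa using ((hasDerivAt_id t).const_mul (lam * perp / (2 * m))).const_sub φ
  refine ⟨?_, ?_, ?_, ?_, ?_⟩
  · intro t ht j
    have hc : Real.cos (φ - lam * perp / (2 * m) * t) ≠ 0 := hJ t ht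
    have hcos : HasDerivAt (fun s : ℝ => Real.cos (φ - lam * perp / (2 * m) * s))
        (-Real.sin (φ - lam * perp / (2 * m) * t) * -(lam * perp / (2 * m))) t :=
      (Real.hasDerivAt_cos _).comp t (hθd t)
    by_cases hj : j = 0
    · subst hj
      simp only [↓reduceIte]
      have h1 : HasDerivAt
          (fun s : ℝ => ϱ 0 + A * (Real.cos (φ - lam * perp / (2 * m) * s) ^ 2
            - Real.cos φ ^ 2))
          (A * ((2 : ℕ) * Real.cos (φ - lam * perp / (2 * m) * t) ^ 1 *
            (-Real.sin (φ - lam * perp / (2 * m) * t) * -(lam * perp / (2 * m))))) t :=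
        (((hcos.pow 2).sub_const _).const_mul A).const_add _
      convert h1 using 1
      set u := φ - lam * perp / (2 * m) * t with hu
      have key : 1 + lam * (ϱ 0 + A * (Real.cos u ^ 2 - Real.cos φ ^ 2))
          = lam * A * Real.cos u ^ 2 := by linear_combination -hAc
      rw [key, Real.tan_eq_sin_div_cos]
      field_simp
      ring
    · simp only [if_neg hj]
      have hsin : HasDerivAt
          (fun s : ℝ => Real.sin (2 * (φ - lam * perp / (2 * m) * s)))
          (Real.cos (2 * (φ - lam * perp / (2 * m) * t)) *
            (2 * -(lam * perp / (2 * m)))) t :=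
        (Real.hasDerivAt_sin _).comp t ((hθd t).const_mul 2)
      have h1 : HasDerivAt
          (fun s : ℝ => ϱ j + lam * ℘ j * A / (2 * m) * s
            - A / 2 * (℘ j / perp) * (Real.sin (2 * (φ - lam * perp / (2 * m) * s))
              - Real.sin (2 * φ)))
          (lam * ℘ j * A / (2 * m) - A / 2 * (℘ j / perp) *
            (Real.cos (2 * (φ - lam * perp / (2 * m) * t)) *
              (2 * -(lam * perp / (2 * m))))) t := by
        have h2 : HasDerivAt (fun s : ℝ => ϱ j + lam * ℘ j * A / (2 * m) * s)
            (lam * ℘ j * A / (2 * m)) t := by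
          simpa using ((hasDerivAt_id t).const_mul (lam * ℘ j * A / (2 * m))).const_add (ϱ j)
        exact h2.sub (((hsin.sub_const _).const_mul (A / 2 * (℘ j / perp))))
      convert h1 using 1
      set u := φ - lam * perp / (2 * m) * t with hu
      have key : 1 + lam * (ϱ 0 + A * (Real.cos u ^ 2 - Real.cos φ ^ 2))
          = lam * A * Real.cos u ^ 2 := by linear_combination -hAc
      simp only [if_true]
      rw [key, Real.cos_two_mul]
      field_simp
      ring
  · intro t ht
    have hc : Real.cos (φ - lam * perp / (2 * m) * t) ≠ 0 := hJ t ht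
    simp only [↓reduceIte]
    have htan : HasDerivAt (fun s : ℝ => Real.tan (φ - lam * perp / (2 * m) * s))
        (1 / Real.cos (φ - lam * perp / (2 * m) * t) ^ 2 * -(lam * perp / (2 * m))) t :=
      by exact (Real.hasDerivAt_tan hc).comp t (hθd t)
    refine (htan.const_mul perp).congr_deriv ?_
    symm
    set u := φ - lam * perp / (2 * m) * t with hu
    rw [Real.tan_eq_sin_div_cos]
    have hsc := Real.sin_sq_add_cos_sq u
    field_simp
    linear_combination (-1) * hsc
  · intro t ht j hj
    simp only [if_neg hj]
    exact hasDerivAt_const t _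
  · intro j
    by_cases hj : j = 0 <;> simp [hj]
  · intro j
    by_cases hj : j = 0
    · subst hj
      simp only [↓reduceIte, mul_zero, sub_zero, htφ]
      field_simp
    · simp [hj]
end

section
/- Let λ > 0, ℓ := 1/λ, m > 0, and let ϱ₀ ∈ ℝ with ℓ + ϱ₀ > 0 and ℘₀ ∈ ℝ, ℘⊥ > 0. Set φ := arctan(℘₀/℘⊥), A := (ℓ + ϱ₀)/cos²(φ), θ(t) := φ − (λ℘⊥/(2m))·t, and x₀(t) := ϱ₀ + A·(cos²(θ(t)) − cos²(φ)). Then for every t ∈ ℝ: −ℓ ≤ x₀(t) ≤ ϱ₀ + (℘₀/℘⊥)²·(ℓ + ϱ₀), and x₀(t) = −ℓ if and only if cos(θ(t)) = 0. That is, whenever the initial momentum has a nonzero component orthogonal to the thermal gradient, the motion along the gradient direction is bounded, confined between the critical plane {x₀ = −ℓ} and the extremal plane {x₀ = ϱ₀ + (℘₀/℘⊥)²(ℓ + ϱ₀)}. -/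
/-- when the initial momentum has a nonzero component `℘⊥ > 0` orthogonal
to the thermal gradient, the motion along the gradient direction,
`x₀(t) = ϱ₀ + A(cos²θ(t) - cos²φ)` with `φ = arctan(℘₀/℘⊥)`, `A = (ℓ+ϱ₀)/cos²φ`,
`θ(t) = φ - (λ℘⊥/(2m))t`, is confined between the critical plane `{x₀ = -ℓ}` and the
extremal plane `{x₀ = ϱ₀ + (℘₀/℘⊥)²(ℓ+ϱ₀)}`, touching the critical plane exactly when
`cos θ(t) = 0`. -/
theorem thermal_motion_bounded (lam ℓ m ϱ0 ℘0 perp φ A : ℝ) (θ x0 : ℝ → ℝ)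
    (hlam : 0 < lam) (hℓ : ℓ = 1 / lam) (hm : 0 < m)
    (hϱ : 0 < ℓ + ϱ0) (hperp : 0 < perp)
    (hφ : φ = Real.arctan (℘0 / perp))
    (hA : A = (ℓ + ϱ0) / (Real.cos φ) ^ 2)
    (hθ : θ = fun t => φ - (lam * perp / (2 * m)) * t)
    (hx0 : x0 = fun t => ϱ0 + A * ((Real.cos (θ t)) ^ 2 - (Real.cos φ) ^ 2)) :
    ∀ t : ℝ,
      (-ℓ ≤ x0 t ∧ x0 t ≤ ϱ0 + (℘0 / perp) ^ 2 * (ℓ + ϱ0)) ∧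
      (x0 t = -ℓ ↔ Real.cos (θ t) = 0) := by
  intro t
  have hcos : Real.cos φ ^ 2 = 1 / (1 + (℘0 / perp) ^ 2) := by
    rw [hφ, Real.cos_sq_arctan]
  have hpos : (0:ℝ) < 1 + (℘0 / perp) ^ 2 := by positivity
  have hA' : A = (ℓ + ϱ0) * (1 + (℘0 / perp) ^ 2) := by
    rw [hA, hcos]; field_simp
  have hApos : 0 < A := by rw [hA']; positivity
  have hkey : A * Real.cos φ ^ 2 = ℓ + ϱ0 := by
    rw [hA', hcos]; field_simp
  have hx : x0 t = -ℓ + A * Real.cos (θ t) ^ 2 := by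
    rw [hx0]; simp only; nlinarith [hkey]
  have hsq : (0:ℝ) ≤ Real.cos (θ t) ^ 2 := sq_nonneg _
  have hle1 : Real.cos (θ t) ^ 2 ≤ 1 := Real.cos_sq_le_one _
  refine ⟨⟨by nlinarith, by nlinarith⟩, ?_⟩
  rw [hx]
  constructor
  · intro h
    have : A * Real.cos (θ t) ^ 2 = 0 := by linarith
    have := (mul_eq_zero.1 this).resolve_left (ne_of_gt hApos)
    exact pow_eq_zero_iff (by norm_num) |>.1 this
  · intro h; rw [h]; ring
end
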